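/- Let f^1,...,f^m be monomials in S = k[x_1,...,x_d] with m ≥ 2. Fix 1 ≤ μ < ν ≤ m and set β = (f^{μ,ν}/f^ν)e_ν − (f^{μ,ν}/f^μ)e_μ where f^{μ,ν} = lcm(f^μ,f^ν). Then for any s ∈ S, the element s·β lies in the S-submodule generated by the remaining elements {β_{(μ',ν')} : (μ',ν') ≠ (μ,ν), μ' < ν'} together with β only if s·β already lies in the intersection ⟨β_{(μ',ν')} : (μ',ν') ≠ (μ,ν)⟩ ∩ ⟨β⟩, and this intersection is of the form I·β for a monomial ideal I ⊆ S. -/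
import Mathlib


open MvPolynomial

namespace Stmt8Aux

variable {K : Type*} [Field K] {d m : ℕ}

noncomputable def proj (t : Fin d →₀ ℕ) (p : MvPolynomial (Fin d) K) : MvPolynomial (Fin d) K :=
  monomial t (coeff t p)

lemma proj_mul_monomial (t u : Fin d →₀ ℕ) (c : MvPolynomial (Fin d) K) :
    proj t (c * monomial u 1) =
      (if u ≤ t then proj (t - u) c else 0) * monomial u 1 := by
  unfold proj
  rw [coeff_mul_monomial']
  split_ifs with h
  · rw [monomial_mul, mul_one, tsub_add_cancel_of_le h]
  · simp

noncomputable def Phi (a : Fin m → (Fin d →₀ ℕ)) (t : Fin d →₀ ℕ)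
    (v : Fin m → MvPolynomial (Fin d) K) : Fin m → MvPolynomial (Fin d) K :=
  fun i => if a i ≤ t then proj (t - a i) (v i) else 0

lemma Phi_add (a : Fin m → (Fin d →₀ ℕ)) (t : Fin d →₀ ℕ)
    (v w : Fin m → MvPolynomial (Fin d) K) :
    Phi a t (v + w) = Phi a t v + Phi a t w := by
  funext i
  simp only [Phi, Pi.add_apply, proj, coeff_add, map_add]
  split_ifs <;> simp

lemma Phi_sub (a : Fin m → (Fin d →₀ ℕ)) (t : Fin d →₀ ℕ)
    (v w : Fin m → MvPolynomial (Fin d) K) :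
    Phi a t (v - w) = Phi a t v - Phi a t w := by
  funext i
  simp only [Phi, Pi.sub_apply, proj, coeff_sub, map_sub]
  split_ifs <;> simp

lemma Phi_smul_single (a : Fin m → (Fin d →₀ ℕ)) (t u : Fin d →₀ ℕ)
    (c : MvPolynomial (Fin d) K) (j : Fin m) :
    Phi a t (c • (Pi.single j (monomial u (1 : K)) : Fin m → MvPolynomial (Fin d) K)) =
      (if u + a j ≤ t then proj (t - (u + a j)) c else 0)
        • (Pi.single j (monomial u (1 : K)) : Fin m → MvPolynomial (Fin d) K) := by
  funext i
  simp only [Phi, Pi.smul_apply, Pi.single_apply, smul_eq_mul, eq_self_iff_true, if_true]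
  rcases eq_or_ne i j with rfl | hij
  · simp only [if_pos rfl, if_true]
    by_cases h1 : u + a i ≤ t
    · have hai : a i ≤ t := le_trans le_add_self h1
      rw [if_pos hai, if_pos h1, proj_mul_monomial]
      have hu : u ≤ t - a i := (le_tsub_iff_right hai).mpr h1
      rw [if_pos hu]
      have hsub : t - a i - u = t - (u + a i) := by rw [tsub_tsub, add_comm]
      rw [hsub]
    · rw [if_neg h1]
      by_cases hai : a i ≤ t
      · rw [if_pos hai, proj_mul_monomial]
        have hu : ¬ u ≤ t - a i := fun hu => h1 ((le_tsub_iff_right hai).mp hu)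
        rw [if_neg hu, zero_mul]
      · rw [if_neg hai, zero_mul]
  · simp only [if_neg hij, mul_zero]
    split_ifs <;> simp [proj]

noncomputable def beta (a : Fin m → (Fin d →₀ ℕ)) (μ' ν' : Fin m) :
    Fin m → MvPolynomial (Fin d) K :=
  Pi.single ν' (monomial (a μ' ⊔ a ν' - a ν') (1 : K))
    - Pi.single μ' (monomial (a μ' ⊔ a ν' - a μ') (1 : K))

lemma Phi_smul_beta (a : Fin m → (Fin d →₀ ℕ)) (t : Fin d →₀ ℕ)
    (c : MvPolynomial (Fin d) K) (μ' ν' : Fin m) :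
    Phi a t (c • beta (K := K) a μ' ν') =
      (if a μ' ⊔ a ν' ≤ t then proj (t - (a μ' ⊔ a ν')) c else 0) • beta (K := K) a μ' ν' := by
  have h1 : a μ' ⊔ a ν' - a ν' + a ν' = a μ' ⊔ a ν' := tsub_add_cancel_of_le le_sup_right
  have h2 : a μ' ⊔ a ν' - a μ' + a μ' = a μ' ⊔ a ν' := tsub_add_cancel_of_le le_sup_left
  unfold beta
  rw [smul_sub, Phi_sub, Phi_smul_single, Phi_smul_single, h1, h2, smul_sub]

lemma Phi_zero (a : Fin m → (Fin d →₀ ℕ)) (t : Fin d →₀ ℕ) :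
    Phi (K := K) a t 0 = 0 := by
  funext i
  simp [Phi, proj]

lemma Phi_sum {X : Type*} (a : Fin m → (Fin d →₀ ℕ)) (t : Fin d →₀ ℕ)
    (s : Finset X) (f : X → (Fin m → MvPolynomial (Fin d) K)) :
    Phi a t (∑ x ∈ s, f x) = ∑ x ∈ s, Phi a t (f x) := by
  induction s using Finset.cons_induction with
  | empty => simpa using Phi_zero a t
  | cons x s hx ih => rw [Finset.sum_cons, Finset.sum_cons, Phi_add, ih]

lemma Phi_mem_span (a : Fin m → (Fin d →₀ ℕ)) (t : Fin d →₀ ℕ)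
    (T : Set (Fin m → MvPolynomial (Fin d) K))
    (hT : ∀ x ∈ T, ∃ μ' ν' : Fin m, x = beta (K := K) a μ' ν')
    {v : Fin m → MvPolynomial (Fin d) K}
    (hv : v ∈ Submodule.span (MvPolynomial (Fin d) K) T) :
    Phi a t v ∈ Submodule.span (MvPolynomial (Fin d) K) T := by
  obtain ⟨c, hsupp, rfl⟩ := Submodule.mem_span_set.mp hv
  rw [Finsupp.sum, Phi_sum]
  refine Submodule.sum_mem _ fun x hx => ?_
  have hxT : x ∈ T := hsupp hx
  obtain ⟨μ', ν', rfl⟩ := hT x hxT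
  show Phi a t (c _ • beta (K := K) a μ' ν') ∈ _
  rw [Phi_smul_beta]
  exact Submodule.smul_mem _ _ (Submodule.subset_span hxT)

lemma key (a : Fin m → (Fin d →₀ ℕ)) (μ ν : Fin m)
    (T : Set (Fin m → MvPolynomial (Fin d) K))
    (hT : ∀ x ∈ T, ∃ μ' ν' : Fin m, x = beta (K := K) a μ' ν')
    (s : MvPolynomial (Fin d) K)
    (hs : s • beta (K := K) a μ ν ∈ Submodule.span (MvPolynomial (Fin d) K) T)
    (b : Fin d →₀ ℕ) :
    monomial b (coeff b s) • beta (K := K) a μ ν ∈ Submodule.span (MvPolynomial (Fin d) K) T := by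
  have h := Phi_mem_span a (b + (a μ ⊔ a ν)) T hT hs
  rw [Phi_smul_beta, if_pos le_add_self, add_tsub_cancel_right] at h
  exact h

theorem main {K : Type*} [Field K] {d m : ℕ} (a : Fin m → (Fin d →₀ ℕ)) (μ ν : Fin m) :
    (∀ s : MvPolynomial (Fin d) K,
        s • beta (K := K) a μ ν ∈ Submodule.span (MvPolynomial (Fin d) K)
          { b | ∃ μ' ν' : Fin m, μ' < ν' ∧ (μ', ν') ≠ (μ, ν) ∧ b = beta (K := K) a μ' ν' } →
        s • beta (K := K) a μ ν ∈ (Submodule.span (MvPolynomial (Fin d) K)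
          { b | ∃ μ' ν' : Fin m, μ' < ν' ∧ (μ', ν') ≠ (μ, ν) ∧ b = beta (K := K) a μ' ν' } ⊓
          Submodule.span (MvPolynomial (Fin d) K) {beta (K := K) a μ ν})) ∧
      ∃ G : Set (Fin d →₀ ℕ),
        (Submodule.span (MvPolynomial (Fin d) K)
          { b | ∃ μ' ν' : Fin m, μ' < ν' ∧ (μ', ν') ≠ (μ, ν) ∧ b = beta (K := K) a μ' ν' } ⊓
          Submodule.span (MvPolynomial (Fin d) K) {beta (K := K) a μ ν})
          = Submodule.map
              (LinearMap.toSpanSingleton (MvPolynomial (Fin d) K)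
                (Fin m → MvPolynomial (Fin d) K) (beta (K := K) a μ ν))
              (Ideal.span ((fun b => monomial b (1 : K)) '' G)) := by
  classical
  set T : Set (Fin m → MvPolynomial (Fin d) K) :=
    { b | ∃ μ' ν' : Fin m, μ' < ν' ∧ (μ', ν') ≠ (μ, ν) ∧ b = beta (K := K) a μ' ν' } with hTdef
  have hT : ∀ x ∈ T, ∃ μ' ν' : Fin m, x = beta (K := K) a μ' ν' := by
    rintro x ⟨μ', ν', -, -, rfl⟩; exact ⟨μ', ν', rfl⟩
  constructor
  · intro s hs
    exact ⟨hs, Submodule.smul_mem _ s (Submodule.mem_span_singleton_self _)⟩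
  · refine ⟨{b | monomial b (1 : K) • beta (K := K) a μ ν ∈
        Submodule.span (MvPolynomial (Fin d) K) T}, le_antisymm ?_ ?_⟩
    · rintro v ⟨hvN, hvB⟩
      obtain ⟨s, rfl⟩ := Submodule.mem_span_singleton.mp hvB
      refine Submodule.mem_map.mpr ⟨s, ?_, LinearMap.toSpanSingleton_apply _ _ _ _⟩
      have hmon : ∀ b ∈ s.support, monomial b (1 : K) • beta (K := K) a μ ν ∈
          Submodule.span (MvPolynomial (Fin d) K) T := by
        intro b hb
        have hk := key a μ ν T hT s hvN b
        have hc : coeff b s ≠ 0 := by simpa using hb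
        have heq : (monomial b (1 : K) : MvPolynomial (Fin d) K)
            = C (coeff b s)⁻¹ * monomial b (coeff b s) := by
          rw [C_mul_monomial, inv_mul_cancel₀ hc]
        rw [heq, mul_smul]
        exact Submodule.smul_mem _ _ hk
      rw [← support_sum_monomial_coeff s]
      refine Ideal.sum_mem _ fun b hb => ?_
      have heq : (monomial b (coeff b s) : MvPolynomial (Fin d) K)
          = C (coeff b s) * monomial b 1 := by rw [C_mul_monomial, mul_one]
      rw [heq]
      exact Ideal.mul_mem_left _ _ (Ideal.subset_span ⟨b, hmon b hb, rfl⟩)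
    · rintro v ⟨p, hp, rfl⟩
      refine ⟨?_, Submodule.mem_span_singleton.mpr ⟨p, rfl⟩⟩
      have hle : Ideal.span ((fun b => monomial b (1 : K)) ''
            {b | monomial b (1 : K) • beta (K := K) a μ ν ∈
              Submodule.span (MvPolynomial (Fin d) K) T})
          ≤ Submodule.comap
              (LinearMap.toSpanSingleton (MvPolynomial (Fin d) K)
                (Fin m → MvPolynomial (Fin d) K) (beta (K := K) a μ ν))
              (Submodule.span (MvPolynomial (Fin d) K) T) := by
        rw [Ideal.span_le]
        rintro x ⟨b, hb, rfl⟩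
        exact hb
      exact hle hp

end Stmt8Aux


/-- For fixed `μ < ν` and `β = β_{(μ,ν)}`, an element `s·β` lies in the submodule `N` generated by
the remaining generators `β_{(μ',ν')}` (together with `β`) only if it lies in the intersection
`N ⊓ ⟨β⟩`, and this intersection is of the form `I·β` for a monomial ideal `I ⊆ S`.
Here `a μ` is the exponent vector of the monomial `f^μ` and
`β_{(μ,ν)} = (f^{μ,ν}/f^ν) e_ν − (f^{μ,ν}/f^μ) e_μ`. -/
theorem stmt8 {K : Type*} [Field K] (d m : ℕ) (hm : 2 ≤ m)
    (a : Fin m → (Fin d →₀ ℕ)) (μ ν : Fin m) (hμν : μ < ν) :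
    (letI S := MvPolynomial (Fin d) K
     letI β : Fin m → Fin m → (Fin m → S) := fun μ' ν' =>
       Pi.single ν' (monomial (a μ' ⊔ a ν' - a ν') (1 : K))
         - Pi.single μ' (monomial (a μ' ⊔ a ν' - a μ') (1 : K))
     letI N : Submodule S (Fin m → S) := Submodule.span S
       { b | ∃ μ' ν' : Fin m, μ' < ν' ∧ (μ', ν') ≠ (μ, ν) ∧ b = β μ' ν' }
     (∀ s : S, s • β μ ν ∈ N → s • β μ ν ∈ N ⊓ Submodule.span S {β μ ν}) ∧
       ∃ G : Set (Fin d →₀ ℕ),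
         N ⊓ Submodule.span S {β μ ν}
           = Submodule.map (LinearMap.toSpanSingleton S (Fin m → S) (β μ ν))
               (Ideal.span ((fun b => monomial b (1 : K)) '' G))) := by
  exact Stmt8Aux.main a μ ν
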